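/- Let p be a prime, K a field of characteristic p, and α, β ∈ K nonzero with (α·β)^p ≠ α·β (i.e., α·β does not lie in the prime subfield). Let C = [[a,b],[c,d]] be a 2×2 matrix over K with c ≠ 0, and define γ := d·((d·β)^{p−1} − c^{p−1}) / (α·c^p·(1 − (α·β)^{p−1})). Then for all m, n ∈ K, the following are equivalent: (i) m^p = m, n^p = n, and the (2,1) entry of C · A₀(m) · A₁(n) equals 0; (ii) γ^p = γ, m = γ, and n·β·(m·c·α + d) = −c. -/

import Mathlib

/-- When `α·β` is not in the prime subfield, the exact condition for
`C · A₀(m) · A₁(n)` (with `m, n` in the prime subfield) to be upper triangular,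
in terms of `γ = d·((d·β)^(p-1) - c^(p-1)) / (α·c^p·(1 - (α·β)^(p-1)))`.
Here `A₀(m) = !![1, m·α; 0, 1]` and `A₁(n) = !![1, 0; n·β, 1]`. -/
theorem upper_triangular_iff_gamma (p : ℕ) [Fact p.Prime]
    (K : Type*) [Field K] [CharP K p] (α β : K) (hα : α ≠ 0) (hβ : β ≠ 0)
    (hab : (α * β) ^ p ≠ α * β)
    (C : Matrix (Fin 2) (Fin 2) K) (hc : C 1 0 ≠ 0) :
    ∀ m n : K,
      (m ^ p = m ∧ n ^ p = n ∧
          (C * !![1, m * α; 0, 1] * !![1, 0; n * β, 1]) 1 0 = 0) ↔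
      ((C 1 1 * ((C 1 1 * β) ^ (p - 1) - C 1 0 ^ (p - 1)) /
            (α * C 1 0 ^ p * (1 - (α * β) ^ (p - 1)))) ^ p =
          C 1 1 * ((C 1 1 * β) ^ (p - 1) - C 1 0 ^ (p - 1)) /
            (α * C 1 0 ^ p * (1 - (α * β) ^ (p - 1))) ∧
        m = C 1 1 * ((C 1 1 * β) ^ (p - 1) - C 1 0 ^ (p - 1)) /
            (α * C 1 0 ^ p * (1 - (α * β) ^ (p - 1))) ∧
        n * β * (m * C 1 0 * α + C 1 1) = -C 1 0) := by
  have hp : p.Prime := Fact.out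
  obtain ⟨q, hq⟩ : ∃ q, p = q + 1 := ⟨p - 1, (Nat.succ_pred_eq_of_pos hp.pos).symm⟩
  subst hq
  simp only [Nat.add_sub_cancel]
  set c := C 1 0 with hcdef
  set d := C 1 1 with hddef
  have h1 : (1 : K) - (α * β) ^ q ≠ 0 := by
    intro h
    apply hab
    have h2 : (α * β) ^ q = 1 := by linear_combination -h
    rw [pow_succ, h2, one_mul]
  have hden : α * c ^ (q + 1) * (1 - (α * β) ^ q) ≠ 0 :=
    mul_ne_zero (mul_ne_zero hα (pow_ne_zero _ hc)) h1
  intro m n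
  have hent : (C * !![1, m * α; 0, 1] * !![1, 0; n * β, 1]) 1 0
      = c + (c * (m * α) + d) * (n * β) := by
    simp [Matrix.mul_apply, Fin.sum_univ_succ]
    rfl
  rw [hent]
  set g := d * ((d * β) ^ q - c ^ q) / (α * c ^ (q + 1) * (1 - (α * β) ^ q)) with hgdef
  -- key lemma
  have key : ∀ m n : K, m ^ (q + 1) = m → n * β * (m * c * α + d) = -c →
      (n ^ (q + 1) = n ↔ m = g) := by
    intro m n hm E
    have hD : m * c * α + d ≠ 0 := by
      intro h
      rw [h, mul_zero] at E
      exact hc (by linear_combination E)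
    have hDp : (m * c * α + d) ^ (q + 1)
        = m * c ^ (q + 1) * α ^ (q + 1) + d ^ (q + 1) := by
      rw [add_pow_char, mul_pow, mul_pow, hm]
    have hDp0 : m * c ^ (q + 1) * α ^ (q + 1) + d ^ (q + 1) ≠ 0 := by
      rw [← hDp]; exact pow_ne_zero _ hD
    have hn : n = -c / (β * (m * c * α + d)) := by
      rw [eq_div_iff (mul_ne_zero hβ hD)]
      linear_combination E
    have hnegc : (-c) ^ (q + 1) = -(c ^ (q + 1)) := by
      have : ((0 : K) - c) ^ (q + 1) = 0 ^ (q + 1) - c ^ (q + 1) := sub_pow_char ..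
      simpa using this
    have hnp : n ^ (q + 1)
        = -(c ^ (q + 1)) / (β ^ (q + 1) * (m * c ^ (q + 1) * α ^ (q + 1) + d ^ (q + 1))) := by
      rw [hn, div_pow, ← hDp, mul_pow, hnegc]
    constructor
    · intro h
      rw [hnp, hn] at h
      rw [div_eq_div_iff (mul_ne_zero (pow_ne_zero _ hβ) hDp0) (mul_ne_zero hβ hD)] at h
      rw [hgdef, eq_div_iff hden]
      refine mul_right_cancel₀ (mul_ne_zero hc hβ) ?_
      linear_combination -h
    · intro h
      rw [hnp, hn]
      rw [div_eq_div_iff (mul_ne_zero (pow_ne_zero _ hβ) hDp0) (mul_ne_zero hβ hD)]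
      rw [hgdef, eq_div_iff hden] at h
      linear_combination (-(c * β)) * h
  constructor
  · rintro ⟨hm, hn, hE⟩
    have E : n * β * (m * c * α + d) = -c := by linear_combination hE
    have hmg : m = g := (key m n hm E).1 hn
    refine ⟨?_, hmg, E⟩
    rw [← hmg]; exact hm
  · rintro ⟨hg, hmg, E⟩
    have hm : m ^ (q + 1) = m := by rw [hmg]; exact hg
    exact ⟨hm, (key m n hm E).2 hmg, by linear_combination E⟩
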